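/- Let H be a real Hilbert space and A : H → 2^H be maximally monotone and σ-strongly monotone with σ > 0. Then the reflected resolvent R_A = 2J_A − Id is (1/(1+σ))-negatively averaged, i.e., −R_A is (1/(1+σ))-averaged. -/
import Mathlib


open RealInnerProductSpace

theorem reflected_resolvent_of_strongly_monotone_neg_averaged
    {H : Type*} [NormedAddCommGroup H] [InnerProductSpace ℝ H]
    (σ : ℝ) (hσ : 0 < σ) (A : H → Set H) (J : H → H)
    (hA : ∀ x y u v : H, u ∈ A x → v ∈ A y → ⟪u - v, x - y⟫ ≥ σ * ‖x - y‖ ^ 2)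
    (hJ : ∀ x : H, x - J x ∈ A (J x)) :
    ∃ N : H → H, (∀ x y : H, ‖N x - N y‖ ≤ ‖x - y‖) ∧
      ∀ x : H, -((2 : ℝ) • J x - x) =
        (1 - 1 / (1 + σ)) • x + (1 / (1 + σ)) • N x := by
  have hc : (1 : ℝ) + σ ≠ 0 := by linarith
  refine ⟨fun x => x - (2 * (1 + σ)) • J x, ?_, ?_⟩
  · intro x y
    have hm := hA (J x) (J y) (x - J x) (y - J y) (hJ x) (hJ y)
    have hkey : (1 + σ) * ‖J x - J y‖ ^ 2 ≤ ⟪x - y, J x - J y⟫ := by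
      have h1 : ⟪(x - J x) - (y - J y), J x - J y⟫
          = ⟪x - y, J x - J y⟫ - ‖J x - J y‖ ^ 2 := by
        rw [show (x - J x) - (y - J y) = (x - y) - (J x - J y) by abel,
          inner_sub_left, real_inner_self_eq_norm_sq]
      nlinarith [hm, h1]
    have hsq : ‖(x - (2 * (1 + σ)) • J x) - (y - (2 * (1 + σ)) • J y)‖ ^ 2
        ≤ ‖x - y‖ ^ 2 := by
      have h2 : (x - (2 * (1 + σ)) • J x) - (y - (2 * (1 + σ)) • J y)
          = (x - y) - (2 * (1 + σ)) • (J x - J y) := by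
        rw [smul_sub]; abel
      rw [h2, norm_sub_sq_real, norm_smul, real_inner_smul_right]
      have hn : ‖(2 * (1 + σ) : ℝ)‖ = 2 * (1 + σ) := by
        rw [Real.norm_eq_abs, abs_of_pos]; linarith
      rw [hn]
      nlinarith [hkey, norm_nonneg (J x - J y), sq_nonneg ‖J x - J y‖]
    nlinarith [hsq, norm_nonneg (x - y),
      norm_nonneg ((x - (2 * (1 + σ)) • J x) - (y - (2 * (1 + σ)) • J y))]
  · intro x
    match_scalars <;> (field_simp; try ring)
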